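/- Let γ : [0,1] → ℝ^r be Lipschitz with |γ'| ≤ 1 a.e., and suppose that for all 0 ≤ a₁ < b₁ ≤ a₂ < b₂ ≤ ⋯ ≤ a_r < b_r ≤ 1 one has det(γ(b₁)−γ(a₁), …, γ(b_r)−γ(a_r)) = 0. Then the derivatives γ'(t), taken over all points of differentiability t ∈ (0,1), span a linear subspace of dimension strictly less than r; hence there is a unit vector v with ⟨v, γ'(t)⟩ = 0 for a.e. t. -/

import Mathlib

open MeasureTheory Set
open scoped RealInnerProductSpace

set_option maxHeartbeats 1000000

/-- Let `γ : [0,1] → ℝ^r` be Lipschitz with `‖γ'‖ ≤ 1` a.e. If for all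
`0 ≤ a₁ < b₁ ≤ a₂ < b₂ ≤ ⋯ ≤ a_r < b_r ≤ 1` one has
`det (γ(b₁)−γ(a₁), …, γ(b_r)−γ(a_r)) = 0`, then the derivatives `γ'(t)` (over all
differentiability points `t ∈ (0,1)`) span a subspace of dimension `< r`; hence there is a
unit vector `v` with `⟪v, γ'(t)⟫ = 0` for a.e. `t ∈ (0,1)`. -/
theorem stmt_17 (r : ℕ) (hr : 0 < r) (γ : ℝ → EuclideanSpace ℝ (Fin r))
    (K : NNReal) (hlip : LipschitzWith K γ)
    (hderiv : ∀ᵐ t ∂(volume.restrict (Set.Ioo (0 : ℝ) 1)), ‖deriv γ t‖ ≤ 1)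
    (hdet : ∀ a b : Fin r → ℝ,
      (∀ i, a i < b i) →
      (∀ i : Fin r, ∀ h : (i : ℕ) + 1 < r, b i ≤ a ⟨(i : ℕ) + 1, h⟩) →
      (∀ i, 0 ≤ a i) → (∀ i, b i ≤ 1) →
      Matrix.det (Matrix.of fun i j : Fin r => (γ (b j) - γ (a j)) i) = 0) :
    Module.finrank ℝ (Submodule.span ℝ
        {x : EuclideanSpace ℝ (Fin r) |
          ∃ t ∈ Set.Ioo (0 : ℝ) 1, DifferentiableAt ℝ γ t ∧ deriv γ t = x}) < r ∧
    ∃ v : EuclideanSpace ℝ (Fin r), ‖v‖ = 1 ∧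
      ∀ᵐ t ∂(volume.restrict (Set.Ioo (0 : ℝ) 1)), ⟪v, deriv γ t⟫ = 0 := by
  set s : Set (EuclideanSpace ℝ (Fin r)) :=
    {x | ∃ t ∈ Set.Ioo (0 : ℝ) 1, DifferentiableAt ℝ γ t ∧ deriv γ t = x} with hs
  have hmain : Module.finrank ℝ (Submodule.span ℝ s) < r := by
    by_contra hge
    push_neg at hge
    -- extract a linearly independent family of size r inside s
    obtain ⟨b, hbs, hbspan, hbind⟩ := exists_linearIndependent ℝ s
    have hbfin : b.Finite := hbind.setFinite
    have : Fintype b := hbfin.fintype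
    have hcard_ge : r ≤ b.toFinset.card := by
      have h1 : Module.finrank ℝ (Submodule.span ℝ b) = b.toFinset.card :=
        finrank_span_set_eq_card hbind
      rw [← h1, hbspan]; exact hge
    obtain ⟨c, hcb, hccard⟩ := Finset.exists_subset_card_eq hcard_ge
    have hcs : (c : Set (EuclideanSpace ℝ (Fin r))) ⊆ s := by
      intro x hx
      exact hbs (by simpa using hcb hx)
    have hcind : LinearIndependent ℝ
        (fun x : (c : Set (EuclideanSpace ℝ (Fin r))) => (x : EuclideanSpace ℝ (Fin r))) := by
      apply LinearIndepOn.mono (v := id) hbind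
      intro x hx
      simpa using hcb hx
    -- choose differentiability points
    choose! τ hτ1 hτdiff hτderiv using fun x (hx : x ∈ s) => hx
    have hτinj : ∀ x ∈ s, ∀ y ∈ s, τ x = τ y → x = y := by
      intro x hx y hy hxy
      rw [← hτderiv x hx, ← hτderiv y hy, hxy]
    -- the finset of chosen times
    set T : Finset ℝ := c.image τ with hT
    have hTcard : T.card = r := by
      rw [hT, Finset.card_image_of_injOn, hccard]
      intro x hx y hy
      exact hτinj x (hcs hx) y (hcs hy)
    set e := T.orderIsoOfFin hTcard with he
    set t : Fin r → ℝ := fun i => (e i : ℝ) with ht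
    have htmono : StrictMono t := fun i j hij => by
      exact_mod_cast e.strictMono hij
    have htmem : ∀ i, t i ∈ T := fun i => (e i).2
    -- each t i is τ x for some x ∈ c
    have hkey : ∀ i, deriv γ (t i) ∈ (c : Set (EuclideanSpace ℝ (Fin r))) ∧
        t i ∈ Set.Ioo (0:ℝ) 1 ∧ DifferentiableAt ℝ γ (t i) := by
      intro i
      obtain ⟨x, hxc, hxt⟩ := Finset.mem_image.1 (htmem i)
      have hxs : x ∈ s := hcs hxc
      refine ⟨?_, ?_, ?_⟩
      · rw [← hxt, hτderiv x hxs]; exact hxc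
      · rw [← hxt]; exact hτ1 x hxs
      · rw [← hxt]; exact hτdiff x hxs
    set w : Fin r → EuclideanSpace ℝ (Fin r) := fun i => deriv γ (t i) with hw
    have hwmem : ∀ i, w i ∈ (c : Set (EuclideanSpace ℝ (Fin r))) := fun i => (hkey i).1
    have htIoo : ∀ i, t i ∈ Set.Ioo (0:ℝ) 1 := fun i => (hkey i).2.1
    have hdiff : ∀ i, DifferentiableAt ℝ γ (t i) := fun i => (hkey i).2.2
    have hwinj : Function.Injective w := by
      intro i j hij
      have : τ (w i) = τ (w j) := by rw [hij]
      have hti : τ (w i) = t i := by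
        obtain ⟨x, hxc, hxt⟩ := Finset.mem_image.1 (htmem i)
        have hxs : x ∈ s := hcs hxc
        have : w i = x := by rw [hw]; simp only [← hxt]; exact hτderiv x hxs
        rw [this, hxt]
      have htj : τ (w j) = t j := by
        obtain ⟨x, hxc, hxt⟩ := Finset.mem_image.1 (htmem j)
        have hxs : x ∈ s := hcs hxc
        have : w j = x := by rw [hw]; simp only [← hxt]; exact hτderiv x hxs
        rw [this, hxt]
      exact htmono.injective (by rw [← hti, ← htj, hij])
    have hwind : LinearIndependent ℝ w := by
      have := hcind.comp (fun i => (⟨w i, hwmem i⟩ : (c : Set (EuclideanSpace ℝ (Fin r)))))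
        (fun i j hij => hwinj (by exact congrArg Subtype.val hij))
      exact this
    -- the limit matrix
    set W : Matrix (Fin r) (Fin r) ℝ := Matrix.of fun i j => w j i with hW
    have hWunit : IsUnit W := by
      rw [← Matrix.linearIndependent_cols_iff_isUnit]
      have h2 : LinearIndependent ℝ (fun j => (w j : Fin r → ℝ)) :=
        hwind.map' (WithLp.linearEquiv 2 ℝ (Fin r → ℝ)).toLinearMap (LinearEquiv.ker _)
      exact h2
    have hWdet : W.det ≠ 0 := by
      intro h
      exact (Matrix.isUnit_iff_isUnit_det W).1 hWunit |>.ne_zero h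
    -- tendsto of the difference quotient matrices
    have htend : Filter.Tendsto
        (fun δ : ℝ => (Matrix.of fun i j : Fin r => δ⁻¹ * ((γ (t j + δ) - γ (t j)) i)).det)
        (nhdsWithin 0 (Set.Ioi 0)) (nhds W.det) := by
      have hM : Filter.Tendsto
          (fun δ : ℝ => (Matrix.of fun i j : Fin r => δ⁻¹ * ((γ (t j + δ) - γ (t j)) i)))
          (nhdsWithin 0 (Set.Ioi 0)) (nhds W) := by
        apply tendsto_pi_nhds.2
        intro i
        rw [tendsto_pi_nhds]
        intro j
        have hd : HasDerivAt γ (w j) (t j) := by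
          rw [hw]; exact (hdiff j).hasDerivAt
        have hslope := hasDerivAt_iff_tendsto_slope.1 hd
        have hadd : Filter.Tendsto (fun δ : ℝ => t j + δ) (nhdsWithin 0 (Set.Ioi 0))
            (nhdsWithin (t j) {(t j)}ᶜ) := by
          apply tendsto_nhdsWithin_of_tendsto_nhds_of_eventually_within
          · have : Filter.Tendsto (fun δ : ℝ => t j + δ) (nhds 0) (nhds (t j)) := by
              exact (by fun_prop : Continuous fun δ : ℝ => t j + δ).tendsto' 0 (t j) (by simp)
            exact this.mono_left nhdsWithin_le_nhds
          · filter_upwards [self_mem_nhdsWithin] with δ (hδ : 0 < δ)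
            simp [ne_of_gt hδ]
        have hcomp := hslope.comp hadd
        have hproj := ((EuclideanSpace.proj i :
            EuclideanSpace ℝ (Fin r) →L[ℝ] ℝ).continuous.tendsto (w j)).comp hcomp
        refine hproj.congr ?_
        intro δ
        show slope γ (t j) (t j + δ) i = δ⁻¹ * ((γ (t j + δ) - γ (t j)) i)
        rw [slope_def_module]
        simp [PiLp.smul_apply, PiLp.sub_apply, add_sub_cancel_left]
      exact (continuous_id.matrix_det.tendsto W).comp hM
    -- eventually the determinant is zero
    haveI : Nonempty (Fin r) := ⟨⟨0, hr⟩⟩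
    have hne : (Finset.univ : Finset (Fin r)).Nonempty := Finset.univ_nonempty
    set g : Fin r → ℝ := fun i =>
      if h : (i : ℕ) + 1 < r then t ⟨(i : ℕ) + 1, h⟩ - t i else 1 - t i with hg
    set ε : ℝ := Finset.univ.inf' hne g with hε
    have hεle1 : ∀ (i : Fin r) (h : (i:ℕ)+1 < r), ε ≤ t ⟨(i:ℕ)+1, h⟩ - t i := by
      intro i h
      have h0 : ε ≤ g i := Finset.inf'_le g (Finset.mem_univ i)
      simpa only [hg, dif_pos h] using h0
    have hεle2 : ∀ i : Fin r, ε ≤ 1 - t i := by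
      intro i
      have h0 : ε ≤ g i := Finset.inf'_le g (Finset.mem_univ i)
      by_cases h : (i:ℕ)+1 < r
      · simp only [hg, dif_pos h] at h0
        have := (htIoo ⟨(i:ℕ)+1, h⟩).2
        linarith
      · simpa only [hg, dif_neg h] using h0
    have hεpos : 0 < ε := by
      rw [hε, Finset.lt_inf'_iff]
      intro i _
      simp only [hg]
      split
      · next h => simpa [sub_pos] using htmono (show i < ⟨(i:ℕ)+1, h⟩ from by simp [Fin.lt_def])
      · simpa [sub_pos] using (htIoo i).2
    have hev : ∀ᶠ δ in nhdsWithin 0 (Set.Ioi 0),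
        (Matrix.of fun i j : Fin r => δ⁻¹ * ((γ (t j + δ) - γ (t j)) i)).det = 0 := by
      filter_upwards [Ioo_mem_nhdsGT_of_mem (show (0:ℝ) ∈ Set.Ico 0 ε from ⟨le_refl _, hεpos⟩)]
        with δ hδ
      obtain ⟨hδ0, hδε⟩ := hδ
      have h0 := hdet t (fun i => t i + δ)
        (fun i => by linarith)
        (fun i h => by have := hεle1 i h; linarith)
        (fun i => le_of_lt (htIoo i).1)
        (fun i => by have := hεle2 i; linarith)
      have : (Matrix.of fun i j : Fin r => δ⁻¹ * ((γ (t j + δ) - γ (t j)) i))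
          = Matrix.of fun i j : Fin r => (fun _ : Fin r => δ⁻¹) j *
            (Matrix.of fun i j : Fin r => ((γ (t j + δ) - γ (t j)) i)) i j := by
        rfl
      rw [this, Matrix.det_mul_column, h0, mul_zero]
    have hzero : Filter.Tendsto
        (fun δ : ℝ => (Matrix.of fun i j : Fin r => δ⁻¹ * ((γ (t j + δ) - γ (t j)) i)).det)
        (nhdsWithin 0 (Set.Ioi 0)) (nhds 0) := by
      exact Filter.Tendsto.congr' (Filter.EventuallyEq.symm hev) tendsto_const_nhds
    exact hWdet (tendsto_nhds_unique htend hzero)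
  refine ⟨hmain, ?_⟩
  -- orthogonal complement
  set S := Submodule.span ℝ s with hS
  have horth : 0 < Module.finrank ℝ (Sᗮ) := by
    have h1 := Submodule.finrank_add_finrank_orthogonal S
    have h2 : Module.finrank ℝ (EuclideanSpace ℝ (Fin r)) = r := finrank_euclideanSpace_fin
    omega
  obtain ⟨x, hxS, hx0⟩ : ∃ x ∈ Sᗮ, x ≠ 0 := by
    haveI : Nontrivial Sᗮ := Module.finrank_pos_iff.mp horth
    obtain ⟨⟨x, hx⟩, hne⟩ := exists_ne (0 : Sᗮ)
    exact ⟨x, hx, fun h => hne (by simpa using h)⟩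
  refine ⟨‖x‖⁻¹ • x, norm_smul_inv_norm hx0, ?_⟩
  have hv : ‖x‖⁻¹ • x ∈ Sᗮ := Submodule.smul_mem _ _ hxS
  rw [ae_restrict_iff' measurableSet_Ioo]
  refine Filter.Eventually.of_forall fun u hu => ?_
  rcases Classical.em (DifferentiableAt ℝ γ u) with hdu|hdu
  · have hmem : deriv γ u ∈ S := Submodule.subset_span ⟨u, hu, hdu, rfl⟩
    have := (Submodule.mem_orthogonal S (‖x‖⁻¹ • x)).1 hv _ hmem
    rw [real_inner_comm]
    exact this
  · rw [deriv_zero_of_not_differentiableAt hdu, inner_zero_right]
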